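/- Let n ≥ 4 be an integer, fix vertices x, y of the cycle graph C_n that are not adjacent in C_n, and let L and R denote the two connected components of C_n − x − y. Let ℓ_1, …, ℓ_s be distinct vertices of L and r_1, …, r_s be distinct vertices of R, and for each i ∈ {1,…,s} let P_i be a path in C_n from ℓ_i to r_i that contains the vertex x but does not contain the vertex y. Then ∑_{i=1}^s |V(P_i)| ≥ s² + 2s, where |V(P_i)| denotes the number of vertices of the path P_i. -/

import Mathlib

open SimpleGraph Finset
open scoped Fin.CommRing

/-- The cycle graph `C_n` with the vertices `x` and `y` deleted (as a graph on
`Fin n` in which `x` and `y` have become isolated). -/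
def deletedCycle (n : ℕ) (x y : Fin n) : SimpleGraph (Fin n) where
  Adj u v := (SimpleGraph.cycleGraph n).Adj u v ∧ u ≠ x ∧ u ≠ y ∧ v ≠ x ∧ v ≠ y
  symm := by constructor; rintro u v ⟨h, h1, h2, h3, h4⟩; exact ⟨h.symm, h3, h4, h1, h2⟩
  loopless := by constructor; rintro u ⟨h, -⟩; exact h.ne rfl


-- sum lemma
lemma sumA : ∀ (T : Finset ℕ), (∀ t ∈ T, 1 ≤ t) → T.card * (T.card + 1) ≤ 2 * ∑ t ∈ T, t := by
  intro T
  induction T using Finset.strongInduction with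
  | _ T ih =>
    intro hT
    rcases T.eq_empty_or_nonempty with rfl | hne
    · simp
    · have hmax := T.max'_mem hne
      set m := T.max' hne with hm
      have hsub : T ⊆ Finset.Icc 1 m := fun t ht => Finset.mem_Icc.2 ⟨hT t ht, Finset.le_max' T t ht⟩
      have hcard : T.card ≤ m := by
        have := Finset.card_le_card hsub
        simpa using this
      have herase := ih (T.erase m) (Finset.erase_ssubset hmax)
        (fun t ht => hT t (Finset.mem_of_mem_erase ht))
      have hsum : ∑ t ∈ T, t = m + ∑ t ∈ T.erase m, t := (Finset.add_sum_erase _ _ hmax).symm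
      have hcc : (T.erase m).card = T.card - 1 := Finset.card_erase_of_mem hmax
      obtain ⟨c, hc⟩ : ∃ c, T.card = c + 1 := ⟨T.card - 1, by have := Finset.card_pos.2 hne; omega⟩
      rw [hc, hsum]
      rw [hcc, hc] at herase
      simp only [Nat.add_sub_cancel] at herase
      nlinarith [herase, hcard]

lemma sumC {s : ℕ} (f : Fin s → ℕ) (hinj : Function.Injective f) (hpos : ∀ i, 1 ≤ f i) :
    s * (s + 1) ≤ 2 * ∑ i, f i := by
  have h1 : ∑ t ∈ Finset.image f Finset.univ, t = ∑ i, f i :=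
    Finset.sum_image (fun i _ j _ h => hinj h)
  have h2 : (Finset.image f Finset.univ).card = s := by
    rw [Finset.card_image_of_injective _ hinj, Finset.card_univ, Fintype.card_fin]
  have := sumA (Finset.image f Finset.univ) (by
    intro t ht
    obtain ⟨i, -, rfl⟩ := Finset.mem_image.1 ht
    exact hpos i)
  rw [h1, h2] at this
  exact this

-- getVert membership
lemma getVert_mem {V : Type*} {G : SimpleGraph V} {u v : V} (W : G.Walk u v) {t : ℕ}
    (ht : t ≤ W.length) : W.getVert t ∈ W.support :=
  Walk.mem_support_iff_exists_getVert.2 ⟨t, rfl, ht⟩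

-- getVert injective on a path
lemma getVert_injOn {V : Type*} {G : SimpleGraph V} {u v : V} (W : G.Walk u v)
    (hW : W.IsPath) : ∀ t1 ≤ W.length, ∀ t2 ≤ W.length,
      W.getVert t1 = W.getVert t2 → t1 = t2 := by
  induction W with
  | nil => intro t1 h1 t2 h2 _; simp at h1 h2; omega
  | @cons a b c h W ih =>
    intro t1 h1 t2 h2 heq
    rw [Walk.cons_isPath_iff] at hW
    obtain ⟨hW', ha⟩ := hW
    simp only [Walk.length_cons] at h1 h2
    match t1, t2 with
    | 0, 0 => rfl
    | 0, t2 + 1 =>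
      exfalso
      rw [Walk.getVert_zero, Walk.getVert_cons_succ] at heq
      exact ha (heq ▸ getVert_mem W (by omega))
    | t1 + 1, 0 =>
      exfalso
      rw [Walk.getVert_zero, Walk.getVert_cons_succ] at heq
      exact ha (heq ▸ getVert_mem W (by omega))
    | t1 + 1, t2 + 1 =>
      rw [Walk.getVert_cons_succ, Walk.getVert_cons_succ] at heq
      have := ih hW' t1 (by omega) t2 (by omega) heq
      omega

-- cycle adjacency
lemma cycle_adj {n : ℕ} [NeZero n] (hn : 2 ≤ n) {u v : Fin n} (h : (cycleGraph n).Adj u v) :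
    v = u - 1 ∨ v = u + 1 := by
  rw [cycleGraph_adj'] at h
  have h1 : (1 : Fin n).val = 1 := by rw [Fin.val_one']; exact Nat.mod_eq_of_lt (by omega)
  rcases h with h | h
  · left
    have h2 : u - v = 1 := Fin.ext (by rw [h, h1])
    linear_combination -h2
  · right
    have h2 : v - u = 1 := Fin.ext (by rw [h, h1])
    linear_combination h2

-- every path in a cycle graph is monotone
lemma walk_direction {n : ℕ} [NeZero n] (hn : 2 ≤ n) {u v : Fin n}
    (W : (cycleGraph n).Walk u v) (hW : W.IsPath) :
    (∀ t ≤ W.length, W.getVert t = u + (t : Fin n)) ∨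
    (∀ t ≤ W.length, W.getVert t = u - (t : Fin n)) := by
  induction W with
  | nil =>
    left; intro t ht
    simp only [Walk.length_nil, Nat.le_zero] at ht
    subst ht; simp
  | @cons a b c h W ih =>
    rw [Walk.cons_isPath_iff] at hW
    obtain ⟨hW', ha⟩ := hW
    rcases cycle_adj hn h with hb | hb
    · -- b = a - 1
      rcases ih hW' with hdir | hdir
      · -- W goes "+" from b = a - 1
        by_cases hL : W.length = 0
        · right; intro t ht
          simp only [Walk.length_cons, hL] at ht
          interval_cases t
          · simp
          · simp [Walk.getVert_cons_succ, hdir 0 (by omega), hb]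
        · exfalso
          have h1 : W.getVert 1 = a := by
            rw [hdir 1 (by omega), hb]; push_cast; ring
          exact ha (h1 ▸ getVert_mem W (by omega))
      · right; intro t ht
        match t with
        | 0 => simp
        | t + 1 =>
          rw [Walk.getVert_cons_succ, hdir t (by simpa [Walk.length_cons] using ht), hb]
          push_cast; ring
    · -- b = a + 1
      rcases ih hW' with hdir | hdir
      · left; intro t ht
        match t with
        | 0 => simp
        | t + 1 =>
          rw [Walk.getVert_cons_succ, hdir t (by simpa [Walk.length_cons] using ht), hb]
          push_cast; ring
      · by_cases hL : W.length = 0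
        · left; intro t ht
          simp only [Walk.length_cons, hL] at ht
          interval_cases t
          · simp
          · simp [Walk.getVert_cons_succ, hdir 0 (by omega), hb]
        · exfalso
          have h1 : W.getVert 1 = a := by
            rw [hdir 1 (by omega), hb]; push_cast; ring
          exact ha (h1 ▸ getVert_mem W (by omega))

lemma sideLemma {n : ℕ} [NeZero n] (hn : 4 ≤ n) (x y : Fin n) (S S' : Set (Fin n))
    (hxS : x ∉ S)
    (hcov : ∀ u : Fin n, u ≠ x → u ≠ y → u ∈ S ∨ u ∈ S')
    (hsep : ∀ u ∈ S, ∀ v ∈ S', ¬ (deletedCycle n x y).Reachable u v)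
    {ℓ : Fin n} (hℓ : ℓ ∈ S)
    (W : (cycleGraph n).Walk ℓ x) (hW : W.IsPath) (hy : y ∉ W.support) :
    1 ≤ W.length ∧
      ((x = ℓ + (W.length : Fin n) ∧ (x - 1) ∈ S) ∨
       (x = ℓ - (W.length : Fin n) ∧ (x + 1) ∈ S)) := by
  set k := W.length with hk
  have hk1 : 1 ≤ k := by
    by_contra hc
    have : ℓ = x := W.eq_of_length_eq_zero (by omega)
    exact hxS (this ▸ hℓ)
  refine ⟨hk1, ?_⟩
  have hne : ∀ t, t < k → W.getVert t ≠ x ∧ W.getVert t ≠ y := by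
    intro t ht
    constructor
    · intro hc
      have := getVert_injOn W hW t (by omega) k le_rfl (by rw [hc, W.getVert_length])
      omega
    · intro hc
      exact hy (hc ▸ getVert_mem W (by omega))
  have hmem : ∀ t, t < k → W.getVert t ∈ S := by
    intro t
    induction t with
    | zero => intro _; simpa using hℓ
    | succ t iht =>
      intro ht
      have hprev := iht (by omega)
      have hadj : (deletedCycle n x y).Adj (W.getVert t) (W.getVert (t + 1)) :=
        ⟨W.adj_getVert_succ (by omega), (hne t (by omega)).1, (hne t (by omega)).2,
          (hne (t + 1) ht).1, (hne (t + 1) ht).2⟩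
      rcases hcov (W.getVert (t + 1)) (hne (t + 1) ht).1 (hne (t + 1) ht).2 with hS | hS'
      · exact hS
      · exact absurd hadj.reachable (hsep _ hprev _ hS')
  rcases walk_direction (by omega) W hW with hdir | hdir
  · left
    have hx : x = ℓ + (k : Fin n) := by rw [← W.getVert_length, hdir k le_rfl]
    refine ⟨hx, ?_⟩
    have h1 : W.getVert (k - 1) = x - 1 := by
      rw [hdir (k - 1) (by omega), hx, Nat.cast_sub hk1]
      push_cast; ring
    exact h1 ▸ hmem (k - 1) (by omega)
  · right
    have hx : x = ℓ - (k : Fin n) := by rw [← W.getVert_length, hdir k le_rfl]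
    refine ⟨hx, ?_⟩
    have h1 : W.getVert (k - 1) = x + 1 := by
      rw [hdir (k - 1) (by omega), hx, Nat.cast_sub hk1]
      push_cast; ring
    exact h1 ▸ hmem (k - 1) (by omega)


/-- Let `x,y` be nonadjacent vertices of `C_n` (`n ≥ 4`) and
`L,R` the two connected components of `C_n - x - y`. If `ℓ₁,…,ℓ_s ∈ L` are
distinct, `r₁,…,r_s ∈ R` are distinct, and each `Pᵢ` is a path in `C_n` from
`ℓᵢ` to `rᵢ` through `x` avoiding `y`, then `∑ |V(Pᵢ)| ≥ s² + 2s`. -/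
theorem pathSum_through_x (n : ℕ) (hn : 4 ≤ n)
    (x y : Fin n) (hxy : x ≠ y) (hnadj : ¬ (SimpleGraph.cycleGraph n).Adj x y)
    (L R : Set (Fin n))
    (hLne : L.Nonempty) (hRne : R.Nonempty) (hdisj : Disjoint L R)
    (hxL : x ∉ L) (hyL : y ∉ L) (hxR : x ∉ R) (hyR : y ∉ R)
    (hcover : ∀ u : Fin n, u ≠ x → u ≠ y → u ∈ L ∨ u ∈ R)
    (hLconn : ∀ u ∈ L, ∀ v ∈ L, (deletedCycle n x y).Reachable u v)
    (hRconn : ∀ u ∈ R, ∀ v ∈ R, (deletedCycle n x y).Reachable u v)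
    (hLR : ∀ u ∈ L, ∀ v ∈ R, ¬ (deletedCycle n x y).Reachable u v)
    (s : ℕ) (ℓ r : Fin s → Fin n)
    (hℓL : ∀ i, ℓ i ∈ L) (hrR : ∀ i, r i ∈ R)
    (hℓinj : Function.Injective ℓ) (hrinj : Function.Injective r)
    (P : ∀ i : Fin s, (SimpleGraph.cycleGraph n).Walk (ℓ i) (r i))
    (hP : ∀ i, (P i).IsPath)
    (hPx : ∀ i, x ∈ (P i).support) (hPy : ∀ i, y ∉ (P i).support) :
    s ^ 2 + 2 * s ≤ ∑ i : Fin s, (P i).support.length := by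
  haveI : NeZero n := ⟨by omega⟩
  rcases Nat.eq_zero_or_pos s with rfl | hs
  · simp
  set q : Fin s → ℕ := fun i => ((P i).takeUntil x (hPx i)).length with hqdef
  set d : Fin s → ℕ := fun i => ((P i).dropUntil x (hPx i)).length with hddef
  have hlen : ∀ i, (P i).length = q i + d i := by
    intro i
    have := congrArg Walk.length ((P i).take_spec (hPx i))
    rw [Walk.length_append] at this
    exact this.symm
  have hQ : ∀ i, 1 ≤ q i ∧
      ((x = ℓ i + (q i : Fin n) ∧ x - 1 ∈ L) ∨ (x = ℓ i - (q i : Fin n) ∧ x + 1 ∈ L)) :=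
    fun i => sideLemma hn x y L R hxL hcover hLR (hℓL i) _ ((hP i).takeUntil _)
      (fun hy => hPy i ((P i).support_takeUntil_subset (hPx i) hy))
  have hD : ∀ i, 1 ≤ d i ∧
      ((x = r i + (d i : Fin n) ∧ x - 1 ∈ R) ∨ (x = r i - (d i : Fin n) ∧ x + 1 ∈ R)) := by
    intro i
    have hrev := sideLemma hn x y R L hxR (fun u h1 h2 => (hcover u h1 h2).symm)
      (fun u hu v hv h => hLR v hv u hu h.symm) (hrR i)
      ((P i).dropUntil x (hPx i)).reverse ((hP i).dropUntil _).reverse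
      (by
        rw [Walk.support_reverse, List.mem_reverse]
        exact fun hy => hPy i ((P i).support_dropUntil_subset (hPx i) hy))
    rwa [Walk.length_reverse] at hrev
  have hq1 : ∀ i, 1 ≤ q i := fun i => (hQ i).1
  have hd1 : ∀ i, 1 ≤ d i := fun i => (hD i).1
  have i0 : Fin s := ⟨0, hs⟩
  have hinj : Function.Injective q ∧ Function.Injective d := by
    by_cases hxm : (x - 1) ∈ L
    · have hDr : ∀ i, x = r i - (d i : Fin n) := by
        intro i
        rcases (hD i).2 with ⟨_, hmem⟩ | h
        · exact absurd hmem (Set.disjoint_left.1 hdisj hxm)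
        · exact h.1
      have hxp : x + 1 ∈ R := by
        rcases (hD i0).2 with ⟨_, hmem⟩ | h
        · exact absurd hmem (Set.disjoint_left.1 hdisj hxm)
        · exact h.2
      have hQl : ∀ i, x = ℓ i + (q i : Fin n) := by
        intro i
        rcases (hQ i).2 with h | ⟨_, hmem⟩
        · exact h.1
        · exact absurd hxp (Set.disjoint_left.1 hdisj hmem)
      constructor
      · intro i j hij
        apply hℓinj
        have e : ∀ i, ℓ i = x - (q i : Fin n) := fun i => by linear_combination -(hQl i)
        rw [e i, e j, hij]
      · intro i j hij
        apply hrinj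
        have e : ∀ i, r i = x + (d i : Fin n) := fun i => by linear_combination -(hDr i)
        rw [e i, e j, hij]
    · have hQl : ∀ i, x = ℓ i - (q i : Fin n) ∧ x + 1 ∈ L := by
        intro i
        rcases (hQ i).2 with ⟨_, hmem⟩ | h
        · exact absurd hmem hxm
        · exact h
      have hxp : x + 1 ∈ L := (hQl i0).2
      have hDr : ∀ i, x = r i + (d i : Fin n) := by
        intro i
        rcases (hD i).2 with h | ⟨_, hmem⟩
        · exact h.1
        · exact absurd hmem (Set.disjoint_left.1 hdisj hxp)
      constructor
      · intro i j hij
        apply hℓinj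
        have e : ∀ i, ℓ i = x + (q i : Fin n) := fun i => by linear_combination -(hQl i).1
        rw [e i, e j, hij]
      · intro i j hij
        apply hrinj
        have e : ∀ i, r i = x - (d i : Fin n) := fun i => by linear_combination -(hDr i)
        rw [e i, e j, hij]
  have hsq := sumC q hinj.1 hq1
  have hsd := sumC d hinj.2 hd1
  have hsum : ∑ i : Fin s, (P i).support.length = (∑ i, q i) + (∑ i, d i) + s := by
    calc ∑ i : Fin s, (P i).support.length = ∑ i : Fin s, (q i + d i + 1) := by
          apply Finset.sum_congr rfl
          intro i _
          rw [Walk.length_support, hlen i]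
      _ = (∑ i, q i) + (∑ i, d i) + s := by
          rw [Finset.sum_add_distrib, Finset.sum_add_distrib, Finset.sum_const,
            Finset.card_univ, Fintype.card_fin, smul_eq_mul, mul_one]
  rw [hsum]
  nlinarith [hsq, hsd]
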